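/- If A is an rc×rc symmetric positive definite matrix that equals a Kronecker product U ⊗ V of symmetric matrices U (c×c) and V (r×r) with U_{1,1} > 0, then there is a choice of sign s ∈ {1, −1} such that sU and sV are both positive definite. -/

import Mathlib

open Matrix
open scoped Kronecker

private lemma kron_quad {c r : ℕ} (U : Matrix (Fin c) (Fin c) ℝ)
    (V : Matrix (Fin r) (Fin r) ℝ) (u : Fin c → ℝ) (x : Fin r → ℝ) :
    dotProduct (fun p : Fin c × Fin r => u p.1 * x p.2)
      ((U ⊗ₖ V) *ᵥ fun p : Fin c × Fin r => u p.1 * x p.2)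
      = (dotProduct u (U *ᵥ u)) * (dotProduct x (V *ᵥ x)) := by
  simp only [dotProduct, mulVec, kroneckerMap_apply, Fintype.sum_prod_type]
  rw [Finset.sum_mul_sum]
  refine Finset.sum_congr rfl fun i _ => ?_
  refine Finset.sum_congr rfl fun j _ => ?_
  simp only [Finset.mul_sum]
  rw [Finset.sum_comm]
  refine Finset.sum_congr rfl fun l _ => ?_
  rw [Finset.sum_mul]
  refine Finset.sum_congr rfl fun k _ => ?_
  ring

theorem kronecker_posDef_factor_signs (c r : ℕ) (hc : 0 < c) (hr : 0 < r)
    (U : Matrix (Fin c) (Fin c) ℝ) (V : Matrix (Fin r) (Fin r) ℝ)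
    (hUsymm : U.IsSymm) (hVsymm : V.IsSymm)
    (hU11 : 0 < U ⟨0, hc⟩ ⟨0, hc⟩)
    (hA : (U ⊗ₖ V).PosDef) :
    ∃ s : ℝ, (s = 1 ∨ s = -1) ∧ (s • U).PosDef ∧ (s • V).PosDef := by
  have herm : ∀ {n : ℕ} (M : Matrix (Fin n) (Fin n) ℝ), M.IsSymm → M.IsHermitian := by
    intro n M hM
    rw [Matrix.IsHermitian, conjTranspose_eq_transpose_of_trivial, hM]
  -- V is posdef
  set e0 : Fin c := ⟨0, hc⟩ with he0
  have hVpd : V.PosDef := by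
    refine Matrix.PosDef.of_dotProduct_mulVec_pos (herm V hVsymm) fun x hx => ?_
    have hy : (fun p : Fin c × Fin r => (Pi.single e0 1 : Fin c → ℝ) p.1 * x p.2) ≠ 0 := by
      intro h
      apply hx
      funext j
      have := congrFun h (e0, j)
      simpa using this
    have := hA.dotProduct_mulVec_pos hy
    rw [show (star fun p : Fin c × Fin r => (Pi.single e0 1 : Fin c → ℝ) p.1 * x p.2)
        = fun p : Fin c × Fin r => (Pi.single e0 1 : Fin c → ℝ) p.1 * x p.2 from rfl,
      kron_quad] at this
    have hUe : dotProduct (Pi.single e0 1 : Fin c → ℝ) (U *ᵥ Pi.single e0 1) = U e0 e0 := by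
      simp [dotProduct, mulVec, Pi.single_apply, Finset.mul_sum]
    rw [hUe] at this
    have hstar : (star x : Fin r → ℝ) = x := rfl
    rw [hstar]
    nlinarith [this, hU11]
  -- get a vector with positive V form
  obtain ⟨x0, hx0⟩ : ∃ x0 : Fin r → ℝ, x0 ≠ 0 := ⟨Pi.single ⟨0, hr⟩ 1, by
    intro h; have := congrFun h ⟨0, hr⟩; simpa using this⟩
  have hVx0 : 0 < dotProduct x0 (V *ᵥ x0) := hVpd.dotProduct_mulVec_pos hx0
  have hUpd : U.PosDef := by
    refine Matrix.PosDef.of_dotProduct_mulVec_pos (herm U hUsymm) fun u hu => ?_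
    have hy : (fun p : Fin c × Fin r => u p.1 * x0 p.2) ≠ 0 := by
      intro h
      apply hu
      funext i
      by_contra hui
      obtain ⟨j, hj⟩ : ∃ j, x0 j ≠ 0 := Function.ne_iff.mp hx0
      have := congrFun h (i, j)
      simp only [Pi.zero_apply, mul_eq_zero] at this
      rcases this with h1 | h2
      · exact hui h1
      · exact hj h2
    have := hA.dotProduct_mulVec_pos hy
    rw [show (star fun p : Fin c × Fin r => u p.1 * x0 p.2)
        = fun p : Fin c × Fin r => u p.1 * x0 p.2 from rfl, kron_quad] at this
    have hstar : (star u : Fin c → ℝ) = u := rfl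
    rw [hstar]
    nlinarith [this, hVx0]
  exact ⟨1, Or.inl rfl, by simpa using hUpd, by simpa using hVpd⟩
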